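/- arXiv:2210.06248 — 3 statements merged into one kernel-verified Lean document; each statement's English description precedes it below -/
import Mathlib

section
/- Let Γ_o = ℤe₁ ⊕ ℤ(σa) be an oblique planar lattice, where σ > 0, ω ∈ (0,π), a = (cos ω)e₁ + (sin ω)e₂, and σa ∉ ℝe₁. If the rotation T_θ by angle θ, with sin θ ≠ 0, is a coincidence isometry of Γ_o, then σ² ∈ ℚ. -/
noncomputable section
open scoped InnerProductSpace

abbrev E2 := EuclideanSpace ℝ (Fin 2)

def e1 : E2 := EuclideanSpace.single 0 1
def e2 : E2 := EuclideanSpace.single 1 1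

/-- The ℤ-span of a set of vectors, as an additive subgroup of ℝ². -/
def latt (s : Set E2) : AddSubgroup E2 := (Submodule.span ℤ s).toAddSubgroup

/-- Image lattice of `Γ` under a linear map. -/
def imageLat (f : E2 →ₗ[ℝ] E2) (Γ : AddSubgroup E2) : AddSubgroup E2 :=
  Γ.map f.toAddMonoidHom

/-- `f` is a coincidence transformation of `Γ`: `Γ ∩ fΓ` has finite index in `Γ`. -/
def CI (Γ : AddSubgroup E2) (f : E2 →ₗ[ℝ] E2) : Prop :=
  (Γ ⊓ imageLat f Γ).relIndex Γ ≠ 0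

/-- Counterclockwise rotation of ℝ² by angle `θ`. -/
def rot (θ : ℝ) : E2 →ₗ[ℝ] E2 :=
  Matrix.toEuclideanLin !![Real.cos θ, -Real.sin θ; Real.sin θ, Real.cos θ]

/-- Reflection in the line through the origin orthogonal to `c`:
`x ↦ x - 2 (⟪x,c⟫ / ‖c‖²) • c`. -/
def reflc (c : E2) : E2 →ₗ[ℝ] E2 :=
  LinearMap.id - (2 / ‖c‖ ^ 2) • ((innerSL ℝ c : E2 →ₗ[ℝ] ℝ).smulRight c)

lemma rot_apply0 (θ : ℝ) (v : E2) :
    (rot θ v) 0 = Real.cos θ * v 0 - Real.sin θ * v 1 := by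
  simp [rot, Matrix.toEuclideanLin_apply, Matrix.mulVec, dotProduct, Fin.sum_univ_two, Matrix.vecHead, Matrix.vecTail]
  ring

lemma rot_apply1 (θ : ℝ) (v : E2) :
    (rot θ v) 1 = Real.sin θ * v 0 + Real.cos θ * v 1 := by
  simp [rot, Matrix.toEuclideanLin_apply, Matrix.mulVec, dotProduct, Fin.sum_univ_two, Matrix.vecHead, Matrix.vecTail]

set_option maxHeartbeats 1000000 in
theorem stmt_8 (σ ω θ : ℝ) (hσ : 0 < σ) (hω : ω ∈ Set.Ioo 0 Real.pi)
    (a : E2) (ha : a = Real.cos ω • e1 + Real.sin ω • e2)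
    (hnot : ¬ ∃ t : ℝ, σ • a = t • e1)
    (hθ : Real.sin θ ≠ 0)
    (hCI : CI (latt {e1, σ • a}) (rot θ)) :
    ∃ q : ℚ, σ ^ 2 = (q : ℝ) := by
  obtain ⟨hω0, hωπ⟩ := hω
  have hsinω : 0 < Real.sin ω := Real.sin_pos_of_pos_of_lt_pi hω0 hωπ
  set Γ := latt {e1, σ • a} with hΓ
  set n := (Γ ⊓ imageLat (rot θ) Γ).relIndex Γ with hn
  have hn0 : n ≠ 0 := hCI
  have he1_0 : e1 0 = 1 := by simp [e1]
  have he1_1 : e1 1 = 0 := by simp [e1, EuclideanSpace.single_apply]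
  have ha0 : (σ • a) 0 = σ * Real.cos ω := by
    simp [ha, e1, e2, EuclideanSpace.single_apply]
  have ha1 : (σ • a) 1 = σ * Real.sin ω := by
    simp [ha, e1, e2, EuclideanSpace.single_apply]
  set c := σ * Real.cos ω with hc
  set t := σ * Real.sin ω with ht
  have ht0 : t ≠ 0 := by positivity
  have hmem : ∀ g ∈ Γ, ∃ p q : ℤ, rot θ ((p : ℝ) • e1 + (q : ℝ) • (σ • a)) = (n : ℕ) • g := by
    intro g hg
    have h1 : (n : ℕ) • g ∈ Γ ⊓ imageLat (rot θ) Γ := by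
      have h2 := AddSubgroup.nsmul_index_mem ((Γ ⊓ imageLat (rot θ) Γ).addSubgroupOf Γ) ⟨g, hg⟩
      rw [AddSubgroup.mem_addSubgroupOf] at h2
      exact h2
    obtain ⟨x, hx, hxe⟩ := h1.2
    have hx' : x ∈ Submodule.span ℤ ({e1, σ • a} : Set E2) := hx
    rw [Submodule.mem_span_pair] at hx'
    obtain ⟨p, q, hpq⟩ := hx'
    refine ⟨p, q, ?_⟩
    have hcast : (p : ℝ) • e1 + (q : ℝ) • (σ • a) = x := by
      rw [← hpq, Int.cast_smul_eq_zsmul, Int.cast_smul_eq_zsmul]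
    rw [hcast]; exact hxe
  have he1mem : e1 ∈ Γ := Submodule.subset_span (by simp)
  have hamem : σ • a ∈ Γ := Submodule.subset_span (by simp)
  obtain ⟨p, q, hE⟩ := hmem e1 he1mem
  obtain ⟨r, s, hF⟩ := hmem (σ • a) hamem
  have hval : ∀ (p q : ℤ) (i : Fin 2),
      ((p : ℝ) • e1 + (q : ℝ) • (σ • a)) i = p * e1 i + q * ((σ • a) i) := by
    intro p q i; simp
  have hE0 := congrFun (congrArg WithLp.ofLp hE) 0
  have hE1 := congrFun (congrArg WithLp.ofLp hE) 1
  have hF0 := congrFun (congrArg WithLp.ofLp hF) 0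
  have hF1 := congrFun (congrArg WithLp.ofLp hF) 1
  rw [rot_apply0] at hE0 hF0
  rw [rot_apply1] at hE1 hF1
  rw [hval, hval] at hE0
  rw [hval, hval] at hE1
  rw [hval, hval] at hF0
  rw [hval, hval] at hF1
  rw [he1_0, he1_1, ha0, ha1] at hE0 hE1 hF0 hF1
  have hsm : ∀ (g : E2) (i : Fin 2), ((n : ℕ) • g) i = (n : ℝ) * g i := by
    intro g i; simp
  rw [hsm, he1_0] at hE0
  rw [hsm, he1_1] at hE1
  rw [hsm, ha0] at hF0
  rw [hsm, ha1] at hF1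
  set C := Real.cos θ with hC
  set S := Real.sin θ with hS
  have hpyth : C ^ 2 + S ^ 2 = 1 := by
    rw [hC, hS, add_comm]; exact Real.sin_sq_add_cos_sq θ
  have h5 : (p : ℝ) + q * c = n * C := by
    linear_combination C * hE0 + S * hE1 - ((p : ℝ) + q * c) * hpyth
  have h6 : (q : ℝ) * t = -(n * S) := by
    linear_combination C * hE1 - S * hE0 - ((q : ℝ) * t) * hpyth
  have h7 : (s : ℝ) * t = n * t * C - n * c * S := by
    linear_combination C * hF1 - S * hF0 - ((s : ℝ) * t) * hpyth
  have hnR : (n : ℝ) ≠ 0 := Nat.cast_ne_zero.mpr hn0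
  have hq0 : (q : ℝ) ≠ 0 := by
    intro h
    rw [h, zero_mul] at h6
    have h6' : (n : ℝ) * S = 0 := by linarith
    rcases mul_eq_zero.mp h6' with h' | h'
    exacts [hnR h', hθ h']
  have h8 : 2 * (q : ℝ) * c = s - p := by
    have key : t * (2 * (q : ℝ) * c - (s - p)) = 0 := by
      linear_combination t * h5 + c * h6 - h7
    rcases mul_eq_zero.mp key with h | h
    · exact absurd h ht0
    · linarith
  have h9 : 2 * (n : ℝ) * C = p + s := by
    linear_combination (-2 : ℝ) * h5 + h8
  have hct : c ^ 2 + t ^ 2 = σ ^ 2 := by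
    rw [hc, ht]
    linear_combination σ ^ 2 * Real.sin_sq_add_cos_sq ω
  refine ⟨((n : ℚ) ^ 2 - p * s) / q ^ 2, ?_⟩
  have hq2 : ((q : ℝ)) ^ 2 ≠ 0 := pow_ne_zero _ hq0
  push_cast
  rw [eq_div_iff hq2]
  linear_combination (-(q : ℝ) ^ 2) * hct + ((2 * (q : ℝ) * c + s - p) / 4) * h8
    + ((q : ℝ) * t - n * S) * h6 + (n : ℝ) ^ 2 * hpyth
    - ((2 * (n : ℝ) * C + p + s) / 4) * h9
end
end

section
/- Let Γ_□ = ℤe₁ ⊕ ℤ(σe₂) be a rectangular lattice with σ² ∈ ℚ, σ > 0. For any nonzero c = p·e₁ + q·(σe₂) with p, q ∈ ℤ, the reflection φ_c is a coincidence isometry of Γ_□. -/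
noncomputable section
open scoped InnerProductSpace

/-! ### Auxiliary lemmas -/

lemma mem_latt_pair {v1 v2 x : E2} : x ∈ latt {v1, v2} ↔ ∃ m n : ℤ, m • v1 + n • v2 = x := by
  rw [latt, Submodule.mem_toAddSubgroup, Submodule.mem_span_pair]

lemma relindex_ne_zero_aux (v1 v2 : E2) (d : ℤ) (hd : d ≠ 0) (K : AddSubgroup E2)
    (h1 : d • v1 ∈ K) (h2 : d • v2 ∈ K) : K.relIndex (latt {v1, v2}) ≠ 0 := by
  set Γ := latt {v1, v2} with hΓ
  have hD : NeZero d.natAbs := ⟨Int.natAbs_ne_zero.mpr hd⟩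
  set D := d.natAbs with hDdef
  have hDK : ∀ v : E2, d • v ∈ K → (D : ℤ) • v ∈ K := by
    intro v hv
    rcases Int.natAbs_eq d with h | h
    · rwa [← h]
    · have : (D : ℤ) = -d := by omega
      rw [this, neg_smul]; exact K.neg_mem hv
  have key : ∀ m : ℤ, ∀ v : E2, d • v ∈ K → (m - ((m : ZMod D).val : ℤ)) • v ∈ K := by
    intro m v hv
    have hdvd : (D : ℤ) ∣ (m - ((m : ZMod D).val : ℤ)) := by
      rw [← ZMod.intCast_zmod_eq_zero_iff_dvd]
      push_cast
      simp [ZMod.natCast_val, ZMod.intCast_cast]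
    obtain ⟨k, hk⟩ := hdvd
    rw [hk, mul_comm, mul_smul]
    exact K.zsmul_mem (hDK v hv) k
  have hmem : ∀ a b : ZMod D, ((a.val : ℤ) • v1 + (b.val : ℤ) • v2) ∈ Γ :=
    fun a b => mem_latt_pair.mpr ⟨a.val, b.val, rfl⟩
  have : Finite (Γ ⧸ K.addSubgroupOf Γ) := by
    apply Finite.of_surjective
      (fun ab : ZMod D × ZMod D =>
        (QuotientAddGroup.mk ⟨(ab.1.val : ℤ) • v1 + (ab.2.val : ℤ) • v2, hmem ab.1 ab.2⟩ :
          Γ ⧸ K.addSubgroupOf Γ))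
    intro y
    induction y using QuotientAddGroup.induction_on with
    | H x =>
      obtain ⟨x, hx⟩ := x
      obtain ⟨m, n, hmn⟩ := mem_latt_pair.mp hx
      refine ⟨((m : ZMod D), (n : ZMod D)), ?_⟩
      rw [QuotientAddGroup.eq]
      show (-(((m : ZMod D).val : ℤ) • v1 + ((n : ZMod D).val : ℤ) • v2) + x) ∈ K
      rw [← hmn]
      have : -(((m : ZMod D).val : ℤ) • v1 + ((n : ZMod D).val : ℤ) • v2) + (m • v1 + n • v2)
          = (m - ((m : ZMod D).val : ℤ)) • v1 + (n - ((n : ZMod D).val : ℤ)) • v2 := by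
        simp [sub_smul]; abel
      rw [this]
      exact K.add_mem (key m v1 h1) (key n v2 h2)
  exact AddSubgroup.index_ne_zero_of_finite

lemma reflc_apply (c x : E2) : reflc c x = x - (2 / ‖c‖ ^ 2) • (⟪c, x⟫_ℝ • c) := rfl

lemma reflc_invol (c : E2) (hc : c ≠ 0) (x : E2) : reflc c (reflc c x) = x := by
  have hD : ‖c‖ ^ 2 ≠ 0 := pow_ne_zero 2 (norm_ne_zero_iff.mpr hc)
  rw [reflc_apply, reflc_apply]
  rw [inner_sub_right, real_inner_smul_right, real_inner_smul_right,
    real_inner_self_eq_norm_sq]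
  set t := ⟪c, x⟫_ℝ
  have h : (2 / ‖c‖ ^ 2) * (t - 2 / ‖c‖ ^ 2 * (t * ‖c‖ ^ 2)) = -(2 / ‖c‖ ^ 2 * t) := by
    field_simp; ring
  rw [smul_smul, smul_smul, h]
  module

section
variable (σ : ℝ) (p q : ℤ) (c : E2) (hc : c = p • e1 + q • (σ • e2))

include hc

lemma inner_c_e1 : ⟪c, e1⟫_ℝ = p := by
  rw [hc, ← Int.cast_smul_eq_zsmul ℝ p, ← Int.cast_smul_eq_zsmul ℝ q]
  simp [e1, e2, inner_add_left, real_inner_smul_left, EuclideanSpace.inner_single_left,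
    EuclideanSpace.single_apply]

lemma inner_c_v2 : ⟪c, σ • e2⟫_ℝ = q * σ ^ 2 := by
  rw [hc, ← Int.cast_smul_eq_zsmul ℝ p, ← Int.cast_smul_eq_zsmul ℝ q]
  simp [e1, e2, inner_add_left, real_inner_smul_left, real_inner_smul_right,
    EuclideanSpace.inner_single_left, EuclideanSpace.single_apply]
  ring

lemma norm_c_sq : ‖c‖ ^ 2 = p ^ 2 + q ^ 2 * σ ^ 2 := by
  rw [← real_inner_self_eq_norm_sq]
  nth_rewrite 2 [hc]
  rw [← Int.cast_smul_eq_zsmul ℝ p e1, ← Int.cast_smul_eq_zsmul ℝ q (σ • e2)]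
  rw [inner_add_right, real_inner_smul_right, real_inner_smul_right,
    inner_c_e1 σ p q c hc, inner_c_v2 σ p q c hc]
  ring

lemma reflc_c_e1 (hc0 : c ≠ 0) :
    reflc c e1 = (1 - 2 * p ^ 2 / ‖c‖ ^ 2) • e1 + (-(2 * p * q) / ‖c‖ ^ 2) • (σ • e2) := by
  rw [reflc_apply, inner_c_e1 σ p q c hc]
  nth_rewrite 2 [hc]
  rw [← Int.cast_smul_eq_zsmul ℝ p e1, ← Int.cast_smul_eq_zsmul ℝ q (σ • e2)]
  match_scalars <;> ring

lemma reflc_c_v2 (hc0 : c ≠ 0) :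
    reflc c (σ • e2) = (-(2 * p * q) * σ ^ 2 / ‖c‖ ^ 2) • e1
      + (1 - 2 * q ^ 2 * σ ^ 2 / ‖c‖ ^ 2) • (σ • e2) := by
  rw [reflc_apply, inner_c_v2 σ p q c hc]
  nth_rewrite 2 [hc]
  rw [← Int.cast_smul_eq_zsmul ℝ p e1, ← Int.cast_smul_eq_zsmul ℝ q (σ • e2)]
  match_scalars <;> ring

end

/-- Clearing denominators of a rational. -/
lemma rat_den_clear (t : ℚ) (k : ℤ) : ((t.den * k : ℤ) : ℚ) * t = (k * t.num : ℤ) := by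
  have h : (t.den : ℚ) * t = t.num := by rw [mul_comm]; exact_mod_cast t.mul_den_eq_num
  push_cast
  linear_combination (k : ℚ) * h

lemma denom_clear_real (t : ℚ) (k d : ℤ) (hdk : d = (t.den : ℤ) * k) :
    (d : ℝ) * (t : ℝ) = ((k * t.num : ℤ) : ℝ) := by
  have h := congrArg (fun x : ℚ => (x : ℝ)) (rat_den_clear t k)
  rw [hdk]
  push_cast at h ⊢
  linear_combination h

lemma zsmul_comb (v1 v2 : E2) (a b : ℝ) (d m n : ℤ) (ha : (d : ℝ) * a = (m : ℝ))
    (hb : (d : ℝ) * b = (n : ℝ)) :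
    d • (a • v1 + b • v2) = m • v1 + n • v2 := by
  rw [← Int.cast_smul_eq_zsmul ℝ d, ← Int.cast_smul_eq_zsmul ℝ m, ← Int.cast_smul_eq_zsmul ℝ n,
    smul_add, smul_smul, smul_smul, ha, hb]

theorem stmt_11 (σ : ℝ) (hσ : 0 < σ) (hσ2 : ∃ r : ℚ, σ ^ 2 = (r : ℝ))
    (p q : ℤ) (c : E2) (hc : c = p • e1 + q • (σ • e2)) (hc0 : c ≠ 0) :
    CI (latt {e1, σ • e2}) (reflc c) := by
  obtain ⟨r, hr⟩ := hσ2
  have hDpos : (0 : ℝ) < ‖c‖ ^ 2 := by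
    have := norm_pos_iff.mpr hc0
    positivity
  set Dq : ℚ := p ^ 2 + q ^ 2 * r with hDq
  have hDqR : (Dq : ℝ) = ‖c‖ ^ 2 := by
    rw [norm_c_sq σ p q c hc, hDq]; push_cast [hr]; ring
  have hDq0 : Dq ≠ 0 := by
    intro h
    rw [h] at hDqR
    simp at hDqR
    linarith
  set α : ℚ := 1 - 2 * p ^ 2 / Dq with hα
  set β : ℚ := -(2 * p * q) / Dq with hβ
  set γ : ℚ := -(2 * p * q) * r / Dq with hγ
  set δ : ℚ := 1 - 2 * q ^ 2 * r / Dq with hδ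
  have hαR : ((α : ℚ) : ℝ) = 1 - 2 * p ^ 2 / ‖c‖ ^ 2 := by
    rw [hα]; push_cast [hDqR]; ring
  have hβR : ((β : ℚ) : ℝ) = -(2 * p * q) / ‖c‖ ^ 2 := by
    rw [hβ]; push_cast [hDqR]; ring
  have hγR : ((γ : ℚ) : ℝ) = -(2 * p * q) * σ ^ 2 / ‖c‖ ^ 2 := by
    rw [hγ]; push_cast [hDqR, hr]; ring
  have hδR : ((δ : ℚ) : ℝ) = 1 - 2 * q ^ 2 * σ ^ 2 / ‖c‖ ^ 2 := by
    rw [hδ]; push_cast [hDqR, hr]; ring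
  set d : ℤ := (α.den * (β.den * (γ.den * δ.den)) : ℤ) with hd
  have hd0 : d ≠ 0 := by
    rw [hd]
    refine mul_ne_zero ?_ (mul_ne_zero ?_ (mul_ne_zero ?_ ?_)) <;>
      exact_mod_cast Rat.den_ne_zero _
  have himg1 : reflc c (d • e1) ∈ latt {e1, σ • e2} := by
    rw [map_zsmul, reflc_c_e1 σ p q c hc hc0, ← hαR, ← hβR]
    refine mem_latt_pair.mpr ⟨(β.den * (γ.den * δ.den)) * α.num,
      (α.den * (γ.den * δ.den)) * β.num, ?_⟩
    refine (zsmul_comb e1 (σ • e2) _ _ d _ _ ?_ ?_).symm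
    · exact denom_clear_real α (β.den * (γ.den * δ.den)) d (by rw [hd])
    · exact denom_clear_real β (α.den * (γ.den * δ.den)) d (by rw [hd]; ring)
  have himg2 : reflc c (d • (σ • e2)) ∈ latt {e1, σ • e2} := by
    rw [map_zsmul, reflc_c_v2 σ p q c hc hc0, ← hγR, ← hδR]
    refine mem_latt_pair.mpr ⟨(α.den * (β.den * δ.den)) * γ.num,
      (α.den * (β.den * γ.den)) * δ.num, ?_⟩
    refine (zsmul_comb e1 (σ • e2) _ _ d _ _ ?_ ?_).symm
    · exact denom_clear_real γ (α.den * (β.den * δ.den)) d (by rw [hd]; ring)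
    · exact denom_clear_real δ (α.den * (β.den * γ.den)) d (by rw [hd]; ring)
  have h1 : d • e1 ∈ latt {e1, σ • e2} ⊓ imageLat (reflc c) (latt {e1, σ • e2}) := by
    constructor
    · exact mem_latt_pair.mpr ⟨d, 0, by simp⟩
    · exact ⟨reflc c (d • e1), himg1, reflc_invol c hc0 _⟩
  have h2 : d • (σ • e2) ∈ latt {e1, σ • e2} ⊓ imageLat (reflc c) (latt {e1, σ • e2}) := by
    constructor
    · exact mem_latt_pair.mpr ⟨0, d, by simp⟩
    · exact ⟨reflc c (d • (σ • e2)), himg2, reflc_invol c hc0 _⟩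
  exact relindex_ne_zero_aux e1 (σ • e2) d hd0 _ h1 h2
end
end

section
/- Let σ > 0 with σ² ∈ ℚ, and let T_θ be a rotation with sin θ ≠ 0 that is a coincidence isometry of Γ_□ = ℤe₁ ⊕ ℤ(σe₂). Then tan(θ/2) = (p/q)·(1/σ) for some coprime integers p, q with q ≠ 0. -/
noncomputable section
open scoped InnerProductSpace

lemma tan_half_aux (θ : ℝ) (h : Real.sin θ ≠ 0) :
    Real.tan (θ/2) = (1 - Real.cos θ) / Real.sin θ := by
  have hs : Real.sin θ = 2 * Real.sin (θ/2) * Real.cos (θ/2) := by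
    have := Real.sin_two_mul (θ/2)
    rw [show 2*(θ/2) = θ by ring] at this; linarith
  have hc : Real.cos θ = 1 - 2 * Real.sin (θ/2)^2 := by
    have := Real.cos_two_mul (θ/2)
    rw [show 2*(θ/2) = θ by ring] at this
    nlinarith [Real.sin_sq_add_cos_sq (θ/2)]
  have hc0 : Real.cos (θ/2) ≠ 0 := by intro h0; rw [h0] at hs; simp at hs; exact h hs
  have hs0 : Real.sin (θ/2) ≠ 0 := by intro h0; rw [h0] at hs; simp at hs; exact h hs
  rw [Real.tan_eq_sin_div_cos, hs, hc]
  field_simp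
  ring

lemma dpos_aux (m kσ n C S : ℝ) (hn : n ≠ 0) (E1 : C * m - S * kσ = n) :
    0 < m ^ 2 + kσ ^ 2 := by
  rcases lt_or_eq_of_le (by positivity : (0:ℝ) ≤ m ^ 2 + kσ ^ 2) with h | h
  · exact h
  · exfalso
    have hm : m = 0 := by nlinarith [sq_nonneg m, sq_nonneg kσ]
    have hk : kσ = 0 := by nlinarith [sq_nonneg m, sq_nonneg kσ]
    rw [hm, hk] at E1; simp at E1; exact hn E1.symm

set_option maxHeartbeats 1000000 in
theorem stmt_14 (σ : ℝ) (hσ : 0 < σ) (hσ2 : ∃ r : ℚ, σ ^ 2 = (r : ℝ))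
    (θ : ℝ) (hθ : Real.sin θ ≠ 0)
    (hCI : CI (latt {e1, σ • e2}) (rot θ)) :
    ∃ p q : ℤ, q ≠ 0 ∧ Int.gcd p q = 1 ∧
      Real.tan (θ / 2) = ((p : ℝ) / (q : ℝ)) * (1 / σ) := by
  obtain ⟨r0, hr0⟩ := hσ2
  have hσ0 : σ ≠ 0 := hσ.ne'
  set Γ := latt {e1, σ • e2} with hΓ
  have he1 : e1 ∈ Γ := by
    rw [hΓ, latt, Submodule.mem_toAddSubgroup]
    exact Submodule.subset_span (Set.mem_insert _ _)
  set K := (Γ ⊓ imageLat (rot θ) Γ).addSubgroupOf Γ with hKdef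
  have hK : K.index ≠ 0 := hCI
  haveI : K.FiniteIndex := ⟨hK⟩
  set n := K.index with hn
  have hmem : n • (⟨e1, he1⟩ : Γ) ∈ K := AddSubgroup.nsmul_index_mem K _
  rw [AddSubgroup.mem_addSubgroupOf] at hmem
  have hmem2 : (n • e1 : E2) ∈ imageLat (rot θ) Γ := hmem.2
  obtain ⟨y, hyΓ, hy⟩ := hmem2
  -- coordinates of y
  have hyΓ' : ∃ m k : ℤ, y 0 = (m:ℝ) ∧ y 1 = (k:ℝ) * σ := by
    have hyΓ2 : y ∈ Submodule.span ℤ ({e1, σ • e2} : Set E2) := hyΓ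
    rw [Submodule.mem_span_pair] at hyΓ2
    obtain ⟨m, k, hmk⟩ := hyΓ2
    refine ⟨m, k, ?_, ?_⟩ <;> rw [← hmk] <;>
      simp [e1, e2, EuclideanSpace.single_apply]
  obtain ⟨m, k, hy0, hy1⟩ := hyΓ'
  have hy' : rot θ y = n • e1 := hy
  have hrot0 : (rot θ y) 0 = Real.cos θ * y 0 - Real.sin θ * y 1 := by
    simp [rot, Matrix.toEuclideanLin_apply, Matrix.mulVec, dotProduct,
      Fin.sum_univ_two]; ring
  have hrot1 : (rot θ y) 1 = Real.sin θ * y 0 + Real.cos θ * y 1 := by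
    simp [rot, Matrix.toEuclideanLin_apply, Matrix.mulVec, dotProduct,
      Fin.sum_univ_two]
  have hne0 : ((n • e1 : E2)) 0 = (n : ℝ) := by simp [e1, EuclideanSpace.single_apply]
  have hne1 : ((n • e1 : E2)) 1 = 0 := by simp [e1, EuclideanSpace.single_apply]
  have E1 : Real.cos θ * m - Real.sin θ * ((k:ℝ)*σ) = (n:ℝ) := by
    rw [← hy0, ← hy1, ← hrot0, hy', hne0]
  have E2eq : Real.sin θ * m + Real.cos θ * ((k:ℝ)*σ) = 0 := by
    rw [← hy0, ← hy1, ← hrot1, hy', hne1]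
  set d : ℝ := (m:ℝ)^2 + (k:ℝ)^2 * σ^2 with hd
  have hcd : Real.cos θ * d = (n:ℝ) * m := by
    rw [hd]; linear_combination (m:ℝ) * E1 + ((k:ℝ)*σ) * E2eq
  have hsd : Real.sin θ * d = -(n:ℝ) * k * σ := by
    rw [hd]; linear_combination (m:ℝ) * E2eq - ((k:ℝ)*σ) * E1
  have hnR : (n:ℝ) ≠ 0 := Nat.cast_ne_zero.mpr hK
  have hdpos : 0 < d := by
    rw [hd, show (k:ℝ)^2*σ^2 = ((k:ℝ)*σ)^2 by ring]
    exact dpos_aux _ _ _ _ _ hnR E1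
  have hkR : (k:ℝ) ≠ 0 := by
    intro h0
    rw [h0] at hsd
    simp at hsd
    rcases hsd with h | h
    · exact hθ h
    · exact hdpos.ne' h
  have hk0 : k ≠ 0 := by exact_mod_cast fun h => hkR (by exact_mod_cast congrArg Int.cast h)
  -- the rational number
  set dq : ℚ := (m:ℚ)^2 + (k:ℚ)^2 * r0 with hdq
  have hdqR : ((dq : ℚ) : ℝ) = d := by push_cast [hdq, hd, ← hr0]; ring
  set t : ℚ := (dq - (n:ℚ)*(m:ℚ)) / (-(n:ℚ)*(k:ℚ)) with ht
  have htR : (t : ℝ) = (d - (n:ℝ)*m) / (-(n:ℝ)*k) := by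
    rw [ht]; push_cast [hdqR]; ring
  refine ⟨t.num, t.den, ?_, ?_, ?_⟩
  · exact_mod_cast t.den_nz
  · simpa [Int.gcd] using t.reduced
  · have h1 : ((t.den : ℤ) : ℝ) = (t.den : ℝ) := by push_cast; ring
    have h2 : ((t.num : ℝ) / (t.den : ℝ)) = (t : ℝ) := by rw [Rat.cast_def]
    rw [h1, h2, tan_half_aux θ hθ, htR]
    have hC : Real.cos θ = (n:ℝ) * m / d := by
      field_simp at hcd ⊢; linarith [hcd]
    have hS : Real.sin θ = -(n:ℝ) * k * σ / d := by
      field_simp at hsd ⊢; linarith [hsd]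
    rw [hC, hS]
    field_simp
end
end
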